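/- arXiv:1504.03602 — 6 statements merged into one kernel-verified Lean document; each statement's English description precedes it below -/
import Mathlib

section
/- Let (A,B) be a win-lose bimatrix game whose bipartite graph has minimum out-degree at least one, and let k ≥ 1. If the bipartite graph of the game contains an undominated set of k rows (or, symmetrically, of k columns), then the game has a (1 − 1/k)-well-supported Nash equilibrium in which the supports of both players' strategies have cardinality at most k. -/
open Finset

/-- A win-lose bimatrix game: all payoff entries are 0 or 1. -/
def IsWinLose {m n : ℕ} (A B : Matrix (Fin m) (Fin n) ℝ) : Prop :=
  ∀ i j, (A i j = 0 ∨ A i j = 1) ∧ (B i j = 0 ∨ B i j = 1)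

/-- A mixed strategy: nonnegative entries summing to 1. -/
def IsStrategy {d : ℕ} (p : Fin d → ℝ) : Prop :=
  (∀ i, 0 ≤ p i) ∧ ∑ i, p i = 1

/-- The support of a mixed strategy. -/
noncomputable def strategySupport {d : ℕ} (p : Fin d → ℝ) : Finset (Fin d) :=
  Finset.univ.filter fun i => 0 < p i

/-- (p, q) is an ε-well-supported Nash equilibrium of the game (A, B). -/
def IsWSNE {m n : ℕ} (A B : Matrix (Fin m) (Fin n) ℝ) (ε : ℝ)
    (p : Fin m → ℝ) (q : Fin n → ℝ) : Prop :=
  IsStrategy p ∧ IsStrategy q ∧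
  (∀ i, 0 < p i → ∀ i', ∑ j, A i j * q j ≥ ∑ j, A i' j * q j - ε) ∧
  (∀ j, 0 < q j → ∀ j', ∑ i, p i * B i j ≥ ∑ i, p i * B i j' - ε)

/-- The bipartite graph of the game has minimum out-degree at least one. -/
def MinOutDegOne {m n : ℕ} (A B : Matrix (Fin m) (Fin n) ℝ) : Prop :=
  (∀ i, ∃ j, A i j = 1) ∧ (∀ j, ∃ i, B i j = 1)

/-- The bipartite graph of the game contains a (directed) cycle of length `2 * s`:
distinct rows `ri 0, …, ri (s-1)` and distinct columns `cj 0, …, cj (s-1)` with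
arcs `ri t → cj t` and `cj t → ri (t+1 mod s)`. -/
def HasBipartiteCycle {m n : ℕ} (A B : Matrix (Fin m) (Fin n) ℝ) (s : ℕ) : Prop :=
  ∃ (ri : Fin s → Fin m) (cj : Fin s → Fin n),
    Function.Injective ri ∧ Function.Injective cj ∧
    (∀ t : Fin s, A (ri t) (cj t) = 1) ∧
    (∀ t : Fin s, B (ri ⟨(t.1 + 1) % s, Nat.mod_lt _ t.pos⟩) (cj t) = 1)

lemma aux_case {m n k : ℕ} (hk : 1 ≤ k)
    (A B : Matrix (Fin m) (Fin n) ℝ)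
    (hWL : IsWinLose A B) (hdegA : ∀ i, ∃ j, A i j = 1)
    (S : Finset (Fin m)) (hS : S.card = k) (hund : ¬ ∃ j, ∀ i ∈ S, B i j = 1) :
    ∃ (p : Fin m → ℝ) (q : Fin n → ℝ),
      IsWSNE A B (1 - 1 / (k : ℝ)) p q ∧
      (strategySupport p).card ≤ k ∧ (strategySupport q).card ≤ k := by
  have hk0 : (0:ℝ) < (k:ℝ) := by exact_mod_cast hk.trans_lt' (by norm_num)
  choose f hf using hdegA
  set p : Fin m → ℝ := fun i => if i ∈ S then ((k:ℝ))⁻¹ else 0 with hp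
  set q : Fin n → ℝ := fun j => ((S.filter fun i => f i = j).card : ℝ) * ((k:ℝ))⁻¹ with hq
  have hpnn : ∀ i, 0 ≤ p i := by
    intro i; simp only [hp]; split <;> positivity
  have hqnn : ∀ j, 0 ≤ q j := by
    intro j; simp only [hq]; positivity
  have hpsum : ∑ i, p i = 1 := by
    simp only [hp, Finset.sum_ite_mem, Finset.univ_inter, Finset.sum_const, nsmul_eq_mul, hS]
    field_simp
  have hqsum : ∑ j, q j = 1 := by
    have hcard : S.card = ∑ j : Fin n, (S.filter fun i => f i = j).card :=
      Finset.card_eq_sum_card_fiberwise (fun i _ => Finset.mem_univ (f i))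
    simp only [hq, ← Finset.sum_mul]
    rw [← Nat.cast_sum, ← hcard, hS]
    field_simp
  -- membership facts
  have hpS : ∀ i, 0 < p i → i ∈ S := by
    intro i hi
    by_contra hiS
    simp [hp, hiS] at hi
  have hqub : ∀ j', ∑ j, A j' j * q j ≤ 1 := by
    intro i'
    calc ∑ j, A i' j * q j ≤ ∑ j, q j := by
          apply Finset.sum_le_sum
          intro j _
          rcases (hWL i' j).1 with h | h <;> simp [h, hqnn j]
      _ = 1 := hqsum
  refine ⟨p, q, ⟨⟨hpnn, hpsum⟩, ⟨hqnn, hqsum⟩, ?_, ?_⟩, ?_, ?_⟩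
  · -- row condition
    intro i hi i'
    have hiS := hpS i hi
    have h1 : ((k:ℝ))⁻¹ ≤ ∑ j, A i j * q j := by
      have hmem : i ∈ S.filter fun i' => f i' = f i := by
        simp [hiS]
      have hcard1 : (1:ℝ) ≤ ((S.filter fun i' => f i' = f i).card : ℝ) := by
        exact_mod_cast Finset.card_pos.mpr ⟨i, hmem⟩
      have hterm : ((k:ℝ))⁻¹ ≤ A i (f i) * q (f i) := by
        rw [hf i, one_mul, hq]
        calc ((k:ℝ))⁻¹ = 1 * ((k:ℝ))⁻¹ := (one_mul _).symm
          _ ≤ _ := by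
            apply mul_le_mul_of_nonneg_right hcard1 (by positivity)
      refine hterm.trans (Finset.single_le_sum (f := fun j => A i j * q j) ?_ (Finset.mem_univ _))
      intro j _
      rcases (hWL i j).1 with h | h <;> simp [h, hqnn j]
    have h2 := hqub i'
    have : (1:ℝ) / k = ((k:ℝ))⁻¹ := one_div _
    linarith
  · -- column condition
    intro j hj j'
    push_neg at hund
    obtain ⟨i₀, hi₀S, hi₀⟩ := hund j'
    have hB0 : B i₀ j' = 0 := (hWL i₀ j').2.resolve_right hi₀
    have hub : ∑ i, p i * B i j' ≤ 1 - 1 / (k:ℝ) := by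
      have h1 : ∑ i, p i * B i j' = ∑ i ∈ S, ((k:ℝ))⁻¹ * B i j' := by
        simp [hp, ite_mul, zero_mul, Finset.sum_ite_mem, Finset.univ_inter]
      have h2 : ∑ i ∈ S.erase i₀, ((k:ℝ))⁻¹ * B i j' + ((k:ℝ))⁻¹ * B i₀ j'
          = ∑ i ∈ S, ((k:ℝ))⁻¹ * B i j' := Finset.sum_erase_add S _ hi₀S
      have h3 : ∑ i ∈ S.erase i₀, ((k:ℝ))⁻¹ * B i j' ≤ ((S.erase i₀).card : ℝ) * ((k:ℝ))⁻¹ := by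
        calc ∑ i ∈ S.erase i₀, ((k:ℝ))⁻¹ * B i j' ≤ ∑ _i ∈ S.erase i₀, ((k:ℝ))⁻¹ := by
              apply Finset.sum_le_sum
              intro i _
              have hb1 : B i j' ≤ 1 := by rcases (hWL i j').2 with h | h <;> simp [h]
              have hb0 : (0:ℝ) ≤ ((k:ℝ))⁻¹ := by positivity
              nlinarith
          _ = ((S.erase i₀).card : ℝ) * ((k:ℝ))⁻¹ := by
              rw [Finset.sum_const, nsmul_eq_mul]
      have h4 : ((S.erase i₀).card : ℝ) = (k:ℝ) - 1 := by
        rw [Finset.card_erase_of_mem hi₀S, hS, Nat.cast_sub hk, Nat.cast_one]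
      rw [h1, ← h2, hB0]
      have : ((k:ℝ) - 1) * ((k:ℝ))⁻¹ = 1 - 1/(k:ℝ) := by field_simp
      rw [h4, this] at h3
      linarith
    have hlb : 0 ≤ ∑ i, p i * B i j := by
      apply Finset.sum_nonneg
      intro i _
      have : 0 ≤ B i j := by rcases (hWL i j).2 with h | h <;> simp [h]
      exact mul_nonneg (hpnn i) this
    linarith
  · -- support p
    rw [← hS]
    apply Finset.card_le_card
    intro i hi
    exact hpS i (by simpa [strategySupport] using hi)
  · -- support q
    calc (strategySupport q).card ≤ (S.image f).card := by
          apply Finset.card_le_card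
          intro j hj
          simp only [strategySupport, Finset.mem_filter, Finset.mem_univ, true_and] at hj
          have : (S.filter fun i => f i = j).Nonempty := by
            rw [← Finset.card_pos]
            by_contra h
            push_neg at h
            rw [Nat.le_zero] at h
            simp [hq, h] at hj
          obtain ⟨i, hi⟩ := this
          simp only [Finset.mem_filter] at hi
          exact Finset.mem_image.mpr ⟨i, hi.1, hi.2⟩
      _ ≤ S.card := Finset.card_image_le
      _ = k := hS

/-- Lemma 1 (undominated set ⇒ small-support WSNE). -/
theorem undominated_set_gives_WSNE {m n k : ℕ} (hk : 1 ≤ k)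
    (A B : Matrix (Fin m) (Fin n) ℝ)
    (hWL : IsWinLose A B) (hdeg : MinOutDegOne A B)
    (hund : (∃ S : Finset (Fin m), S.card = k ∧ ¬ ∃ j, ∀ i ∈ S, B i j = 1) ∨
            (∃ T : Finset (Fin n), T.card = k ∧ ¬ ∃ i, ∀ j ∈ T, A i j = 1)) :
    ∃ (p : Fin m → ℝ) (q : Fin n → ℝ),
      IsWSNE A B (1 - 1 / (k : ℝ)) p q ∧
      (strategySupport p).card ≤ k ∧ (strategySupport q).card ≤ k := by
  rcases hund with ⟨S, hS, hund⟩ | ⟨T, hT, hund⟩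
  · exact aux_case hk A B hWL hdeg.1 S hS hund
  · obtain ⟨q, p, ⟨hq, hp, c1, c2⟩, hqc, hpc⟩ :=
      aux_case hk (fun j i => B i j) (fun j i => A i j)
        (fun j i => ⟨(hWL i j).2, (hWL i j).1⟩) hdeg.2 T hT hund
    refine ⟨p, q, ⟨hp, hq, ?_, ?_⟩, hpc, hqc⟩
    · intro i hi i'
      have := c2 i hi i'
      simpa [mul_comm] using this
    · intro j hj j'
      have := c1 j hj j'
      simpa [mul_comm] using this
end

section
/- Let (A,B) be a win-lose bimatrix game and let k ≥ 1. If the bipartite graph of the game contains a (directed) cycle of length 2k, then the game has a (1 − 1/k)-well-supported Nash equilibrium in which the supports of both players' strategies have cardinality at most k. -/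
open Finset

/-- Lemma 2 (a cycle of length 2k ⇒ small-support (1-1/k)-WSNE). -/
theorem cycle_gives_WSNE {m n k : ℕ} (hk : 1 ≤ k)
    (A B : Matrix (Fin m) (Fin n) ℝ)
    (hWL : IsWinLose A B)
    (hcyc : HasBipartiteCycle A B k) :
    ∃ (p : Fin m → ℝ) (q : Fin n → ℝ),
      IsWSNE A B (1 - 1 / (k : ℝ)) p q ∧
      (strategySupport p).card ≤ k ∧ (strategySupport q).card ≤ k := by

  obtain ⟨ri, cj, hri, hcj, hA, hB⟩ := hcyc
  have hk0 : (0:ℝ) < k := by exact_mod_cast hk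
  set p : Fin m → ℝ := fun i => if i ∈ Finset.univ.image ri then 1 / k else 0 with hp
  set q : Fin n → ℝ := fun j => if j ∈ Finset.univ.image cj then 1 / k else 0 with hq
  have hpnn : ∀ i, 0 ≤ p i := by
    intro i; simp only [hp]; split <;> positivity
  have hqnn : ∀ j, 0 ≤ q j := by
    intro j; simp only [hq]; split <;> positivity
  have hpsum : ∑ i, p i = 1 := by
    simp only [hp]
    rw [Finset.sum_ite_mem, Finset.univ_inter, Finset.sum_const,
      Finset.card_image_of_injective _ hri, Finset.card_univ, Fintype.card_fin]
    rw [nsmul_eq_mul]; field_simp [hk0.ne']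
  have hqsum : ∑ j, q j = 1 := by
    simp only [hq]
    rw [Finset.sum_ite_mem, Finset.univ_inter, Finset.sum_const,
      Finset.card_image_of_injective _ hcj, Finset.card_univ, Fintype.card_fin]
    rw [nsmul_eq_mul]; field_simp [hk0.ne']
  have hpmem : ∀ t, p (ri t) = 1 / k := by
    intro t; simp [hp]
  have hqmem : ∀ t, q (cj t) = 1 / k := by
    intro t; simp [hq]
  have hA01 : ∀ i j, (0:ℝ) ≤ A i j ∧ A i j ≤ 1 := by
    intro i j; rcases (hWL i j).1 with h | h <;> simp [h]
  have hB01 : ∀ i j, (0:ℝ) ≤ B i j ∧ B i j ≤ 1 := by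
    intro i j; rcases (hWL i j).1 with h | h <;> rcases (hWL i j).2 with h' | h' <;> simp [h, h']
  refine ⟨p, q, ⟨⟨hpnn, hpsum⟩, ⟨hqnn, hqsum⟩, ?_, ?_⟩, ?_, ?_⟩
  · -- row condition
    intro i hpi i'
    have hi : i ∈ Finset.univ.image ri := by
      by_contra h; simp only [hp, h, if_false] at hpi; exact lt_irrefl 0 hpi
    obtain ⟨t, -, ht⟩ := Finset.mem_image.mp hi
    have hlow : (1:ℝ) / k ≤ ∑ j, A i j * q j := by
      have := Finset.single_le_sum (f := fun j => A i j * q j)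
        (fun j _ => mul_nonneg (hA01 i j).1 (hqnn j)) (Finset.mem_univ (cj t))
      calc (1:ℝ)/k = A i (cj t) * q (cj t) := by rw [← ht, hA t, hqmem t]; ring
        _ ≤ _ := this
    have hup : ∑ j, A i' j * q j ≤ 1 := by
      calc ∑ j, A i' j * q j ≤ ∑ j, q j := by
            apply Finset.sum_le_sum; intro j _
            nlinarith [(hA01 i' j).1, (hA01 i' j).2, hqnn j]
        _ = 1 := hqsum
    linarith
  · -- column condition
    intro j hqj j'
    have hj : j ∈ Finset.univ.image cj := by
      by_contra h; simp only [hq, h, if_false] at hqj; exact lt_irrefl 0 hqj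
    obtain ⟨t, -, ht⟩ := Finset.mem_image.mp hj
    set t' : Fin k := ⟨(t.1 + 1) % k, Nat.mod_lt _ t.pos⟩ with ht'
    have hlow : (1:ℝ) / k ≤ ∑ i, p i * B i j := by
      have := Finset.single_le_sum (f := fun i => p i * B i j)
        (fun i _ => mul_nonneg (hpnn i) (hB01 i j).1) (Finset.mem_univ (ri t'))
      calc (1:ℝ)/k = p (ri t') * B (ri t') j := by
            rw [← ht, hB t, hpmem t']; ring
        _ ≤ _ := this
    have hup : ∑ i, p i * B i j' ≤ 1 := by
      calc ∑ i, p i * B i j' ≤ ∑ i, p i := by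
            apply Finset.sum_le_sum; intro i _
            nlinarith [(hB01 i j').1, (hB01 i j').2, hpnn i]
        _ = 1 := hpsum
    linarith
  · calc (strategySupport p).card ≤ (Finset.univ.image ri).card := by
          apply Finset.card_le_card; intro i hi
          simp only [strategySupport, Finset.mem_filter] at hi
          by_contra h; simp only [hp, h, if_false] at hi; exact lt_irrefl 0 hi.2
      _ ≤ k := by rw [Finset.card_image_of_injective _ hri]; simp
  · calc (strategySupport q).card ≤ (Finset.univ.image cj).card := by
          apply Finset.card_le_card; intro j hj
          simp only [strategySupport, Finset.mem_filter] at hj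
          by_contra h; simp only [hq, h, if_false] at hj; exact lt_irrefl 0 hj.2
      _ ≤ k := by rw [Finset.card_image_of_injective _ hcj]; simp
end

section
/- Let (A,B) be a win-lose bimatrix game whose bipartite graph has minimum out-degree at least one, and let k ≥ 1. If the bipartite graph contains a cycle of length 2k, or an undominated set of k rows, or an undominated set of k columns, then the game has a (1 − 1/k)-well-supported Nash equilibrium in which the supports of both players' strategies have cardinality at most k. -/
open Finset

noncomputable def unifStrat {ι : Type*} [DecidableEq ι] (S : Finset ι) : ι → ℝ :=
  fun i => if i ∈ S then (S.card : ℝ)⁻¹ else 0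

lemma unifStrat_nonneg {ι : Type*} [DecidableEq ι] (S : Finset ι) (i : ι) :
    0 ≤ unifStrat S i := by
  unfold unifStrat; split <;> positivity

lemma unifStrat_sum {ι : Type*} [Fintype ι] [DecidableEq ι] {S : Finset ι} (hS : S.Nonempty) :
    ∑ i, unifStrat S i = 1 := by
  have hc : (S.card : ℝ) ≠ 0 := Nat.cast_ne_zero.2 (Finset.card_ne_zero.2 hS)
  simp only [unifStrat]
  rw [Finset.sum_ite_mem, Finset.univ_inter, Finset.sum_const, nsmul_eq_mul,
    mul_inv_cancel₀ hc]

lemma mem_of_unifStrat_pos {ι : Type*} [DecidableEq ι] {S : Finset ι} {i : ι}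
    (h : 0 < unifStrat S i) : i ∈ S := by
  by_contra hc; simp [unifStrat, hc] at h

lemma unifStrat_support_subset {d : ℕ} (S : Finset (Fin d)) :
    strategySupport (unifStrat S) ⊆ S := by
  intro i hi
  simp only [strategySupport, mem_filter] at hi
  exact mem_of_unifStrat_pos hi.2

lemma payoff_nonneg {ι : Type*} [Fintype ι] {a w : ι → ℝ} (ha : ∀ j, a j = 0 ∨ a j = 1)
    (hw : ∀ j, 0 ≤ w j) : 0 ≤ ∑ j, a j * w j :=
  Finset.sum_nonneg fun j _ => mul_nonneg (by rcases ha j with h | h <;> simp [h]) (hw j)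

lemma payoff_le_one {ι : Type*} [Fintype ι] {a w : ι → ℝ} (ha : ∀ j, a j = 0 ∨ a j = 1)
    (hw : ∀ j, 0 ≤ w j) (hsum : ∑ j, w j = 1) : ∑ j, a j * w j ≤ 1 := by
  calc ∑ j, a j * w j ≤ ∑ j, w j := by
        refine Finset.sum_le_sum fun j _ => ?_
        rcases ha j with h | h
        · simpa [h] using hw j
        · simp [h]
    _ = 1 := hsum

lemma payoff_ge {ι : Type*} [Fintype ι] [DecidableEq ι] {a : ι → ℝ} {T : Finset ι} {j0 : ι}
    {k : ℕ} (ha : ∀ j, a j = 0 ∨ a j = 1) (hj0 : j0 ∈ T) (ha0 : a j0 = 1)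
    (hcard : T.card ≤ k) : 1 / (k : ℝ) ≤ ∑ j, a j * unifStrat T j := by
  have h1 : a j0 * unifStrat T j0 = (T.card : ℝ)⁻¹ := by simp [unifStrat, hj0, ha0]
  have hle : a j0 * unifStrat T j0 ≤ ∑ j, a j * unifStrat T j :=
    Finset.single_le_sum (fun j _ => mul_nonneg
      (by rcases ha j with h | h <;> simp [h]) (unifStrat_nonneg T j)) (Finset.mem_univ j0)
  have hTpos : (0 : ℝ) < T.card := Nat.cast_pos.2 (Finset.card_pos.2 ⟨j0, hj0⟩)
  have hkk : 1 / (k : ℝ) ≤ (T.card : ℝ)⁻¹ := by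
    rw [one_div]
    gcongr
  linarith [h1 ▸ hle]

lemma payoff_le_sub {ι : Type*} [Fintype ι] [DecidableEq ι] {a : ι → ℝ} {T : Finset ι}
    {j0 : ι} {k : ℕ} (hk : 1 ≤ k) (ha : ∀ j, a j = 0 ∨ a j = 1) (hj0 : j0 ∈ T)
    (ha0 : a j0 = 0) (hcard : T.card = k) :
    ∑ j, a j * unifStrat T j ≤ 1 - 1 / (k : ℝ) := by
  have hk0 : (k : ℝ) ≠ 0 := by positivity
  have h1 : ∑ j, a j * unifStrat T j = ∑ j ∈ T, a j * (k : ℝ)⁻¹ := by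
    simp only [unifStrat, mul_ite, mul_zero, hcard]
    rw [Finset.sum_ite_mem, Finset.univ_inter]
  rw [h1, ← Finset.add_sum_erase _ _ hj0, ha0, zero_mul, zero_add]
  calc ∑ j ∈ T.erase j0, a j * (k : ℝ)⁻¹ ≤ ∑ _j ∈ T.erase j0, (k : ℝ)⁻¹ := by
        refine Finset.sum_le_sum fun j _ => ?_
        rcases ha j with h | h <;> simp [h]
    _ = ((k - 1 : ℕ) : ℝ) * (k : ℝ)⁻¹ := by
        rw [Finset.sum_const, Finset.card_erase_of_mem hj0, hcard, nsmul_eq_mul]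
    _ = 1 - 1 / (k : ℝ) := by
        rw [Nat.cast_sub hk, Nat.cast_one]
        field_simp

lemma build_WSNE {m n k : ℕ} (hk : 1 ≤ k) (A B : Matrix (Fin m) (Fin n) ℝ)
    {S : Finset (Fin m)} {T : Finset (Fin n)} (hS : S.Nonempty) (hT : T.Nonempty)
    (hSc : S.card ≤ k) (hTc : T.card ≤ k)
    (hrow : ∀ i ∈ S, ∀ i', ∑ j, A i j * unifStrat T j ≥
      ∑ j, A i' j * unifStrat T j - (1 - 1 / (k : ℝ)))
    (hcol : ∀ j ∈ T, ∀ j', ∑ i, unifStrat S i * B i j ≥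
      ∑ i, unifStrat S i * B i j' - (1 - 1 / (k : ℝ))) :
    ∃ (p : Fin m → ℝ) (q : Fin n → ℝ),
      IsWSNE A B (1 - 1 / (k : ℝ)) p q ∧
      (strategySupport p).card ≤ k ∧ (strategySupport q).card ≤ k := by
  refine ⟨unifStrat S, unifStrat T,
    ⟨⟨unifStrat_nonneg S, unifStrat_sum hS⟩, ⟨unifStrat_nonneg T, unifStrat_sum hT⟩,
      fun i hi i' => hrow i (mem_of_unifStrat_pos hi) i',
      fun j hj j' => hcol j (mem_of_unifStrat_pos hj) j'⟩,
    (Finset.card_le_card (unifStrat_support_subset S)).trans hSc,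
    (Finset.card_le_card (unifStrat_support_subset T)).trans hTc⟩

/-- Corollary 1 (cycle of length 2k or undominated set of size k ⇒ small-support WSNE). -/
theorem cycle_or_undominated_gives_WSNE {m n k : ℕ} (hk : 1 ≤ k)
    (A B : Matrix (Fin m) (Fin n) ℝ)
    (hWL : IsWinLose A B) (hdeg : MinOutDegOne A B)
    (hyp : HasBipartiteCycle A B k ∨
           (∃ S : Finset (Fin m), S.card = k ∧ ¬ ∃ j, ∀ i ∈ S, B i j = 1) ∨
           (∃ T : Finset (Fin n), T.card = k ∧ ¬ ∃ i, ∀ j ∈ T, A i j = 1)) :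
    ∃ (p : Fin m → ℝ) (q : Fin n → ℝ),
      IsWSNE A B (1 - 1 / (k : ℝ)) p q ∧
      (strategySupport p).card ≤ k ∧ (strategySupport q).card ≤ k := by
  have hAe : ∀ i j, A i j = 0 ∨ A i j = 1 := fun i j => (hWL i j).1
  have hBe : ∀ i j, B i j = 0 ∨ B i j = 1 := fun i j => (hWL i j).2
  rcases hyp with ⟨ri, cj, hri, hcj, hA, hB⟩ | ⟨S, hSk, hund⟩ | ⟨T, hTk, hund⟩
  · -- cycle case
    set S : Finset (Fin m) := Finset.univ.image ri with hSdef
    set T : Finset (Fin n) := Finset.univ.image cj with hTdef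
    have hS : S.Nonempty := (Finset.univ_nonempty_iff.2 ⟨⟨0, hk⟩⟩).image ri
    have hT : T.Nonempty := (Finset.univ_nonempty_iff.2 ⟨⟨0, hk⟩⟩).image cj
    have hSc : S.card ≤ k := by
      rw [hSdef, Finset.card_image_of_injective _ hri, Finset.card_univ, Fintype.card_fin]
    have hTc : T.card ≤ k := by
      rw [hTdef, Finset.card_image_of_injective _ hcj, Finset.card_univ, Fintype.card_fin]
    refine build_WSNE hk A B hS hT hSc hTc ?_ ?_
    · intro i hi i'
      obtain ⟨t, -, rfl⟩ := Finset.mem_image.1 hi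
      have h1 : 1 / (k : ℝ) ≤ ∑ j, A (ri t) j * unifStrat T j :=
        payoff_ge (hAe (ri t)) (Finset.mem_image_of_mem cj (Finset.mem_univ t)) (hA t) hTc
      have h2 : ∑ j, A i' j * unifStrat T j ≤ 1 :=
        payoff_le_one (hAe i') (unifStrat_nonneg T) (unifStrat_sum hT)
      linarith
    · intro j hj j'
      obtain ⟨t, -, rfl⟩ := Finset.mem_image.1 hj
      have h1 : 1 / (k : ℝ) ≤ ∑ i, B i (cj t) * unifStrat S i :=
        payoff_ge (fun i => hBe i (cj t))
          (Finset.mem_image_of_mem ri (Finset.mem_univ ⟨(t.1 + 1) % k, Nat.mod_lt _ t.pos⟩))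
          (hB t) hSc
      have h2 : ∑ i, B i j' * unifStrat S i ≤ 1 :=
        payoff_le_one (fun i => hBe i j') (unifStrat_nonneg S) (unifStrat_sum hS)
      simp only [mul_comm (unifStrat S _)]
      linarith
  · -- undominated rows case
    have hS : S.Nonempty := Finset.card_pos.1 (hSk ▸ hk)
    set f : Fin m → Fin n := fun i => (hdeg.1 i).choose with hfdef
    have hf : ∀ i, A i (f i) = 1 := fun i => (hdeg.1 i).choose_spec
    set T : Finset (Fin n) := S.image f with hTdef
    have hT : T.Nonempty := hS.image f
    have hTc : T.card ≤ k := (Finset.card_image_le).trans_eq hSk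
    refine build_WSNE hk A B hS hT hSk.le hTc ?_ ?_
    · intro i hi i'
      have h1 : 1 / (k : ℝ) ≤ ∑ j, A i j * unifStrat T j :=
        payoff_ge (hAe i) (Finset.mem_image_of_mem f hi) (hf i) hTc
      have h2 : ∑ j, A i' j * unifStrat T j ≤ 1 :=
        payoff_le_one (hAe i') (unifStrat_nonneg T) (unifStrat_sum hT)
      linarith
    · intro j hj j'
      push_neg at hund
      obtain ⟨i0, hi0S, hi0⟩ := hund j'
      have hi00 : B i0 j' = 0 := (hBe i0 j').resolve_right hi0
      have h1 : ∑ i, B i j' * unifStrat S i ≤ 1 - 1 / (k : ℝ) :=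
        payoff_le_sub hk (fun i => hBe i j') hi0S hi00 hSk
      have h2 : 0 ≤ ∑ i, B i j * unifStrat S i :=
        payoff_nonneg (fun i => hBe i j) (unifStrat_nonneg S)
      simp only [mul_comm (unifStrat S _)]
      linarith
  · -- undominated columns case
    have hT : T.Nonempty := Finset.card_pos.1 (hTk ▸ hk)
    set g : Fin n → Fin m := fun j => (hdeg.2 j).choose with hgdef
    have hg : ∀ j, B (g j) j = 1 := fun j => (hdeg.2 j).choose_spec
    set S : Finset (Fin m) := T.image g with hSdef
    have hS : S.Nonempty := hT.image g
    have hSc : S.card ≤ k := (Finset.card_image_le).trans_eq hTk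
    refine build_WSNE hk A B hS hT hSc hTk.le ?_ ?_
    · intro i hi i'
      push_neg at hund
      obtain ⟨j0, hj0T, hj0⟩ := hund i'
      have hj00 : A i' j0 = 0 := (hAe i' j0).resolve_right hj0
      have h1 : ∑ j, A i' j * unifStrat T j ≤ 1 - 1 / (k : ℝ) :=
        payoff_le_sub hk (hAe i') hj0T hj00 hTk
      have h2 : 0 ≤ ∑ j, A i j * unifStrat T j :=
        payoff_nonneg (hAe i) (unifStrat_nonneg T)
      linarith
    · intro j hj j'
      have h1 : 1 / (k : ℝ) ≤ ∑ i, B i j * unifStrat S i :=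
        payoff_ge (fun i => hBe i j) (Finset.mem_image_of_mem g hj) (hg j) hSc
      have h2 : ∑ i, B i j' * unifStrat S i ≤ 1 :=
        payoff_le_one (fun i => hBe i j') (unifStrat_nonneg S) (unifStrat_sum hS)
      simp only [mul_comm (unifStrat S _)]
      linarith
end

section
/- Let (A,B) be a win-lose bimatrix game whose bipartite graph has minimum out-degree at least one, let k ≥ 1, and let 0 ≤ ε < 1. If the game has an ε-well-supported Nash equilibrium in which the supports of both players' strategies have cardinality at most k, then the bipartite graph of the game contains an undominated set of k rows, or an undominated set of k columns, or a cycle of length 2s for some s with 1 ≤ s ≤ k. -/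
open Finset

lemma mod_succ_inj {s a b : ℕ} (ha : a < s) (hb : b < s)
    (h : (a + 1) % s = (b + 1) % s) : a = b := by
  rcases Nat.lt_or_ge (a+1) s with h1 | h1
  · rcases Nat.lt_or_ge (b+1) s with h2 | h2
    · rw [Nat.mod_eq_of_lt h1, Nat.mod_eq_of_lt h2] at h; omega
    · have hb1 : b + 1 = s := by omega
      rw [Nat.mod_eq_of_lt h1, hb1, Nat.mod_self] at h; omega
  · have ha1 : a + 1 = s := by omega
    rcases Nat.lt_or_ge (b+1) s with h2 | h2
    · rw [ha1, Nat.mod_self, Nat.mod_eq_of_lt h2] at h; omega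
    · omega

lemma cycle_of_closed {m n : ℕ} (A B : Matrix (Fin m) (Fin n) ℝ)
    (S : Finset (Fin m)) (hS : S.Nonempty)
    (f : Fin m → Fin n) (g : Fin n → Fin m)
    (hf : ∀ i ∈ S, A i (f i) = 1) (hg : ∀ i ∈ S, B (g (f i)) (f i) = 1)
    (hcl : ∀ i ∈ S, g (f i) ∈ S) :
    ∃ s, 1 ≤ s ∧ s ≤ S.card ∧ HasBipartiteCycle A B s := by
  classical
  obtain ⟨x₀, hx₀⟩ := hS
  set h : Fin m → Fin m := g ∘ f with hh
  set u : ℕ → Fin m := fun t => h^[t] x₀ with hu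
  have humem : ∀ t, u t ∈ S := by
    intro t; induction t with
    | zero => simpa [u] using hx₀
    | succ t ih =>
      have heq : u (t+1) = h (u t) := by
        simp [u, Function.iterate_succ_apply']
      rw [heq]; exact hcl _ ih
  have hpig : ∃ a ∈ Finset.range (S.card + 1), ∃ b ∈ Finset.range (S.card + 1),
      a ≠ b ∧ u a = u b := by
    apply Finset.exists_ne_map_eq_of_card_lt_of_maps_to (t := S)
    · simpa using Nat.lt_succ_self _
    · intro a _; exact humem a
  obtain ⟨a, ha, b, hb, hab, hub⟩ := hpig
  have hex : ∃ b, ∃ a, a < b ∧ u a = u b := by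
    rcases lt_or_gt_of_ne hab with hlt | hlt
    · exact ⟨b, a, hlt, hub⟩
    · exact ⟨a, b, hlt, hub.symm⟩
  set b₀ := Nat.find hex with hb₀
  obtain ⟨a₀, ha₀lt, ha₀eq⟩ := Nat.find_spec hex
  have hmin : ∀ c, c < b₀ → ¬ ∃ a, a < c ∧ u a = u c := fun c hc => Nat.find_min hex hc
  have hb₀le : b₀ ≤ S.card := by
    rcases lt_or_gt_of_ne hab with hlt | hlt
    · exact le_trans (Nat.find_min' hex ⟨a, hlt, hub⟩)
        (by simpa using Nat.lt_succ_iff.mp (Finset.mem_range.mp hb))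
    · exact le_trans (Nat.find_min' hex ⟨b, hlt, hub.symm⟩)
        (by simpa using Nat.lt_succ_iff.mp (Finset.mem_range.mp ha))
  set s := b₀ - a₀ with hs
  have hs1 : 1 ≤ s := by omega
  set x := u a₀ with hx
  have hxiter : ∀ t, h^[t] x = u (a₀ + t) := by
    intro t
    simp only [hx, hu, ← Function.iterate_add_apply]
    rw [Nat.add_comm]
  have hper : h^[s] x = x := by
    rw [hxiter]
    have : a₀ + s = b₀ := by omega
    rw [this, ← ha₀eq]
  have hdist : ∀ t t', t < t' → t' < s → h^[t] x ≠ h^[t'] x := by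
    intro t t' htt' ht's heq
    rw [hxiter, hxiter] at heq
    exact hmin (a₀ + t') (by omega) ⟨a₀ + t, by omega, heq⟩
  have hmemx : ∀ t, h^[t] x ∈ S := by intro t; rw [hxiter]; exact humem _
  set ri : Fin s → Fin m := fun t => h^[t.1] x with hri
  have hriinj : Function.Injective ri := by
    intro t t' heq
    rcases lt_trichotomy t.1 t'.1 with hlt | heqv | hlt
    · exact absurd heq (hdist _ _ hlt t'.2)
    · exact Fin.ext heqv
    · exact absurd heq.symm (hdist _ _ hlt t.2)
  set cj : Fin s → Fin n := fun t => f (ri t) with hcj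
  have hbridge : ∀ t : Fin s, ri ⟨(t.1 + 1) % s, Nat.mod_lt _ t.pos⟩ = h (ri t) := by
    intro t
    show h^[(t.1 + 1) % s] x = h (h^[t.1] x)
    rcases Nat.lt_or_ge (t.1 + 1) s with h1 | h1
    · rw [Nat.mod_eq_of_lt h1]
      exact Function.iterate_succ_apply' h t.1 x
    · have hts : t.1 + 1 = s := by omega
      have hmod : (t.1 + 1) % s = 0 := by rw [hts]; exact Nat.mod_self s
      rw [hmod]
      calc h^[0] x = h^[s] x := hper.symm
        _ = h^[t.1 + 1] x := by rw [hts]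
        _ = h (h^[t.1] x) := Function.iterate_succ_apply' h t.1 x
  refine ⟨s, hs1, le_trans (by omega) hb₀le, ri, cj, hriinj, ?_, ?_, ?_⟩
  · intro t t' heq
    have hgg : g (cj t) = g (cj t') := by rw [heq]
    have h2 : ri ⟨(t.1 + 1) % s, Nat.mod_lt _ t.pos⟩
        = ri ⟨(t'.1 + 1) % s, Nat.mod_lt _ t'.pos⟩ := by
      rw [hbridge, hbridge]; exact hgg
    have hval : (t.1 + 1) % s = (t'.1 + 1) % s := congrArg Fin.val (hriinj h2)
    exact Fin.ext (mod_succ_inj t.2 t'.2 hval)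
  · intro t; exact hf _ (hmemx _)
  · intro t
    rw [hbridge]
    exact hg _ (hmemx _)

/-- Lemma 4 (small-support ε-WSNE ⇒ undominated set of size k or a short cycle). -/
theorem WSNE_gives_cycle_or_undominated {m n k : ℕ} (hk : 1 ≤ k) (ε : ℝ)
    (hε0 : 0 ≤ ε) (hε1 : ε < 1)
    (A B : Matrix (Fin m) (Fin n) ℝ)
    (hWL : IsWinLose A B) (hdeg : MinOutDegOne A B)
    (hWSNE : ∃ (p : Fin m → ℝ) (q : Fin n → ℝ),
      IsWSNE A B ε p q ∧
      (strategySupport p).card ≤ k ∧ (strategySupport q).card ≤ k) :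
    (∃ S : Finset (Fin m), S.card = k ∧ ¬ ∃ j, ∀ i ∈ S, B i j = 1) ∨
    (∃ T : Finset (Fin n), T.card = k ∧ ¬ ∃ i, ∀ j ∈ T, A i j = 1) ∨
    (∃ s, 1 ≤ s ∧ s ≤ k ∧ HasBipartiteCycle A B s) := by
  classical
  obtain ⟨p, q, ⟨⟨hp0, hp1⟩, ⟨hq0, hq1⟩, hrow, hcol⟩, hpk, hqk⟩ := hWSNE
  have hSmem : ∀ i, i ∈ strategySupport p ↔ 0 < p i := by
    intro i; simp [strategySupport]
  have hTmem : ∀ j, j ∈ strategySupport q ↔ 0 < q j := by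
    intro j; simp [strategySupport]
  have hSne : (strategySupport p).Nonempty := by
    by_contra hne
    rw [Finset.not_nonempty_iff_eq_empty] at hne
    have hz : ∑ i, p i = 0 := Finset.sum_eq_zero (fun i _ => by
      by_contra hpi
      have h1 : 0 < p i := lt_of_le_of_ne (hp0 i) (Ne.symm hpi)
      have h2 : i ∈ strategySupport p := (hSmem i).mpr h1
      rw [hne] at h2
      exact absurd h2 (Finset.notMem_empty i))
    rw [hp1] at hz; norm_num at hz
  have hTne : (strategySupport q).Nonempty := by
    by_contra hne
    rw [Finset.not_nonempty_iff_eq_empty] at hne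
    have hz : ∑ j, q j = 0 := Finset.sum_eq_zero (fun j _ => by
      by_contra hqj
      have h1 : 0 < q j := lt_of_le_of_ne (hq0 j) (Ne.symm hqj)
      have h2 : j ∈ strategySupport q := (hTmem j).mpr h1
      rw [hne] at h2
      exact absurd h2 (Finset.notMem_empty j))
    rw [hq1] at hz; norm_num at hz
  have hm1 : 0 < m := hSne.choose.pos
  have hn1 : 0 < n := hTne.choose.pos
  haveI : Nonempty (Fin m) := ⟨⟨0, hm1⟩⟩
  haveI : Nonempty (Fin n) := ⟨⟨0, hn1⟩⟩
  set f0 : Fin m → Fin n := fun i => (hdeg.1 i).choose with hf0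
  have hf0spec : ∀ i, A i (f0 i) = 1 := fun i => (hdeg.1 i).choose_spec
  set g0 : Fin n → Fin m := fun j => (hdeg.2 j).choose with hg0
  have hg0spec : ∀ j, B (g0 j) j = 1 := fun j => (hdeg.2 j).choose_spec
  rcases le_or_gt k m with hkm | hkm
  · rcases le_or_gt k n with hkn | hkn
    · -- k ≤ m and k ≤ n
      by_cases hSdom : ∃ j, ∀ i ∈ strategySupport p, B i j = 1
      · by_cases hTdom : ∃ i, ∀ j ∈ strategySupport q, A i j = 1
        · -- both supports dominated: find a short cycle within the supports
          have rowclaim : ∀ i, 0 < p i → ∃ j, 0 < q j ∧ A i j = 1 := by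
            obtain ⟨i₀, hi₀⟩ := hTdom
            intro i hpi
            have h1 : (1:ℝ) ≤ ∑ j, A i₀ j * q j := by
              rw [← hq1]
              apply Finset.sum_le_sum
              intro j _
              rcases lt_or_eq_of_le (hq0 j) with hqj | hqj
              · rw [hi₀ j ((hTmem j).mpr hqj), one_mul]
              · rw [← hqj, mul_zero]
            have h2 := hrow i hpi i₀
            have h4 : ∑ j, (fun _ : Fin n => (0:ℝ)) j < ∑ j, A i j * q j := by
              simp only []
              rw [Finset.sum_const_zero]
              linarith
            obtain ⟨j, hj⟩ := Finset.exists_lt_of_sum_lt h4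
            have hj' : (0:ℝ) < A i j * q j := hj.2
            rcases (hWL i j).1 with hA | hA
            · rw [hA, zero_mul] at hj'; exact absurd hj' (lt_irrefl 0)
            · rw [hA, one_mul] at hj'; exact ⟨j, hj', hA⟩
          have colclaim : ∀ j, 0 < q j → ∃ i, 0 < p i ∧ B i j = 1 := by
            obtain ⟨j₀, hj₀⟩ := hSdom
            intro j hqj
            have h1 : (1:ℝ) ≤ ∑ i, p i * B i j₀ := by
              rw [← hp1]
              apply Finset.sum_le_sum
              intro i _
              rcases lt_or_eq_of_le (hp0 i) with hpi | hpi
              · rw [hj₀ i ((hSmem i).mpr hpi), mul_one]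
              · rw [← hpi, zero_mul]
            have h2 := hcol j hqj j₀
            have h4 : ∑ i, (fun _ : Fin m => (0:ℝ)) i < ∑ i, p i * B i j := by
              simp only []
              rw [Finset.sum_const_zero]
              linarith
            obtain ⟨i, hi⟩ := Finset.exists_lt_of_sum_lt h4
            have hi' : (0:ℝ) < p i * B i j := hi.2
            rcases (hWL i j).2 with hB | hB
            · rw [hB, mul_zero] at hi'; exact absurd hi' (lt_irrefl 0)
            · rw [hB, mul_one] at hi'; exact ⟨i, hi', hB⟩
          set fq : Fin m → Fin n :=
            fun i => if hi : ∃ j, 0 < q j ∧ A i j = 1 then hi.choose else f0 i with hfq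
          set gp : Fin n → Fin m :=
            fun j => if hj : ∃ i, 0 < p i ∧ B i j = 1 then hj.choose else g0 j with hgp
          have hfqspec : ∀ i, 0 < p i → 0 < q (fq i) ∧ A i (fq i) = 1 := by
            intro i hpi
            have hi := rowclaim i hpi
            simp only [hfq, dif_pos hi]
            exact hi.choose_spec
          have hgpspec : ∀ j, 0 < q j → 0 < p (gp j) ∧ B (gp j) j = 1 := by
            intro j hqj
            have hj := colclaim j hqj
            simp only [hgp, dif_pos hj]
            exact hj.choose_spec
          obtain ⟨s, hs1, hs2, hcyc⟩ := cycle_of_closed A B (strategySupport p) hSne fq gp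
            (fun i hi => (hfqspec i ((hSmem i).mp hi)).2)
            (fun i hi => (hgpspec (fq i) (hfqspec i ((hSmem i).mp hi)).1).2)
            (fun i hi => (hSmem _).mpr
              (hgpspec (fq i) (hfqspec i ((hSmem i).mp hi)).1).1)
          exact Or.inr (Or.inr ⟨s, hs1, le_trans hs2 hpk, hcyc⟩)
        · -- support of q is undominated: extend to k columns
          obtain ⟨T', hsub, _, hcard⟩ := Finset.exists_subsuperset_card_eq
            (Finset.subset_univ (strategySupport q)) hqk
            (by simpa [Finset.card_univ] using hkn)
          refine Or.inr (Or.inl ⟨T', hcard, ?_⟩)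
          rintro ⟨i, hi⟩
          exact hTdom ⟨i, fun j hj => hi j (hsub hj)⟩
      · -- support of p is undominated: extend to k rows
        obtain ⟨S', hsub, _, hcard⟩ := Finset.exists_subsuperset_card_eq
          (Finset.subset_univ (strategySupport p)) hpk
          (by simpa [Finset.card_univ] using hkm)
        refine Or.inl ⟨S', hcard, ?_⟩
        rintro ⟨j, hj⟩
        exact hSdom ⟨j, fun i hi => hj i (hsub hi)⟩
    · -- n < k: the whole graph yields a cycle with at most n rows
      obtain ⟨s, hs1, hs2, hcyc⟩ := cycle_of_closed A B (Finset.image g0 Finset.univ)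
        (Finset.univ_nonempty.image g0) f0 g0
        (fun i _ => hf0spec i) (fun i _ => hg0spec (f0 i))
        (fun i _ => Finset.mem_image_of_mem g0 (Finset.mem_univ _))
      have hcard : (Finset.image g0 Finset.univ).card ≤ n := by
        exact le_trans Finset.card_image_le (by simp)
      exact Or.inr (Or.inr ⟨s, hs1, by omega, hcyc⟩)
  · -- m < k: the whole graph yields a cycle with at most m rows
    obtain ⟨s, hs1, hs2, hcyc⟩ := cycle_of_closed A B Finset.univ
      Finset.univ_nonempty f0 g0
      (fun i _ => hf0spec i) (fun i _ => hg0spec (f0 i))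
      (fun i _ => Finset.mem_univ _)
    have hcard : (Finset.univ : Finset (Fin m)).card = m := by simp
    exact Or.inr (Or.inr ⟨s, hs1, by omega, hcyc⟩)
end

section
/- Let (A,B) be a win-lose bimatrix game whose bipartite graph has minimum out-degree at least one, let k ≥ 1, and let ε satisfy 1 − 1/k ≤ ε < 1. Then the game has an ε-well-supported Nash equilibrium in which the supports of both players' strategies have cardinality at most k if and only if the bipartite graph of the game contains an undominated set of k rows, or an undominated set of k columns, or a cycle of length 2s for some s with 1 ≤ s ≤ k. -/
open Finset

lemma mem_strategySupport {d : ℕ} {p : Fin d → ℝ} {i} :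
    i ∈ strategySupport p ↔ 0 < p i := by simp [strategySupport]

lemma sum_strategySupport {d : ℕ} {p : Fin d → ℝ} (hp : IsStrategy p) :
    ∑ i ∈ strategySupport p, p i = 1 := by
  have h0 : ∀ i ∈ Finset.univ, i ∉ strategySupport p → p i = 0 := by
    intro i _ hi
    rw [mem_strategySupport] at hi
    linarith [hp.1 i]
  rw [← hp.2]
  exact Finset.sum_subset (Finset.subset_univ _) h0

lemma exists_cycle_aux {m n : ℕ} (A B : Matrix (Fin m) (Fin n) ℝ)
    (S : Finset (Fin m)) (T : Finset (Fin n)) (hS : S.Nonempty)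
    (hrow : ∀ i ∈ S, ∃ j ∈ T, A i j = 1)
    (hcol : ∀ j ∈ T, ∃ i ∈ S, B i j = 1) :
    ∃ s, 1 ≤ s ∧ s ≤ S.card ∧ s ≤ T.card ∧ HasBipartiteCycle A B s := by
  classical
  obtain ⟨i0, hi0⟩ := hS
  have hT : T.Nonempty := by
    obtain ⟨j, hj, -⟩ := hrow i0 hi0
    exact ⟨j, hj⟩
  obtain ⟨j0, hj0⟩ := hT
  -- choice functions
  set col : Fin m → Fin n := fun i => if h : i ∈ S then (hrow i h).choose else j0 with hcoldef
  set g : Fin n → Fin m := fun j => if h : j ∈ T then (hcol j h).choose else i0 with hgdef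
  have hcolT : ∀ i ∈ S, col i ∈ T := by
    intro i hi
    simp only [hcoldef, dif_pos hi]
    exact (hrow i hi).choose_spec.1
  have hcolA : ∀ i ∈ S, A i (col i) = 1 := by
    intro i hi
    simp only [hcoldef, dif_pos hi]
    exact (hrow i hi).choose_spec.2
  have hgS : ∀ j ∈ T, g j ∈ S := by
    intro j hj
    simp only [hgdef, dif_pos hj]
    exact (hcol j hj).choose_spec.1
  have hgB : ∀ j ∈ T, B (g j) j = 1 := by
    intro j hj
    simp only [hgdef, dif_pos hj]
    exact (hcol j hj).choose_spec.2
  set f : Fin m → Fin m := g ∘ col with hfdef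
  have hfS : ∀ i ∈ S, f i ∈ S := fun i hi => hgS _ (hcolT i hi)
  have horb : ∀ t : ℕ, f^[t] i0 ∈ S := by
    intro t
    induction t with
    | zero => exact hi0
    | succ t ih => rw [Function.iterate_succ_apply']; exact hfS _ ih
  -- find a periodic point
  obtain ⟨a, b, hab, heq⟩ := Finite.exists_ne_map_eq_of_infinite (fun t : ℕ => f^[t] i0)
  wlog hlt : a < b generalizing a b
  · exact this b a hab.symm heq.symm (by omega)
  set y : Fin m := f^[a] i0 with hydef
  have hyper : Function.IsPeriodicPt f (b - a) y := by
    show f^[b-a] y = y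
    rw [hydef, ← Function.iterate_add_apply]
    have : b - a + a = b := by omega
    rw [this]
    exact heq.symm
  have hbapos : 0 < b - a := by omega
  set c := Function.minimalPeriod f y with hcdef
  have hcpos : 0 < c := hyper.minimalPeriod_pos hbapos
  have hcper : Function.IsPeriodicPt f c y := Function.isPeriodicPt_minimalPeriod f y
  have hyS : y ∈ S := horb a
  have horbY : ∀ t : ℕ, f^[t] y ∈ S := by
    intro t
    rw [hydef, ← Function.iterate_add_apply]
    exact horb _
  -- define the cycle
  have hinj : ∀ t u : ℕ, t < c → u < c → f^[t] y = f^[u] y → t = u := by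
    intro t u ht hu h
    exact Function.iterate_injOn_Iio_minimalPeriod ht hu h
  refine ⟨c, hcpos, ?_, ?_, ?_⟩
  · -- c ≤ S.card
    have := Finset.card_le_card_of_injOn (s := (Finset.univ : Finset (Fin c))) (t := S)
      (fun t : Fin c => f^[t.1] y)
      (fun t _ => horbY t.1) (fun t _ u _ h => Fin.ext (hinj t.1 u.1 t.2 u.2 h))
    simpa using this
  · -- c ≤ T.card
    have := Finset.card_le_card_of_injOn (s := (Finset.univ : Finset (Fin c))) (t := T)
      (fun t : Fin c => col (f^[t.1] y))
      (fun t _ => hcolT _ (horbY t.1)) ?_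
    · simpa using this
    · intro t _ u _ h
      apply Fin.ext
      have h2 : f (f^[t.1] y) = f (f^[u.1] y) := by
        exact congrArg g h
      rw [← Function.iterate_succ_apply' f t.1 y, ← Function.iterate_succ_apply' f u.1 y] at h2
      rw [← hcper.iterate_mod_apply (t.1+1), ← hcper.iterate_mod_apply (u.1+1)] at h2
      have := hinj _ _ (Nat.mod_lt _ hcpos) (Nat.mod_lt _ hcpos) h2
      -- (t+1) % c = (u+1) % c → t = u for t,u < c
      rcases Nat.lt_or_ge (t.1+1) c with h1 | h1
      · rcases Nat.lt_or_ge (u.1+1) c with h3 | h3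
        · rw [Nat.mod_eq_of_lt h1, Nat.mod_eq_of_lt h3] at this; omega
        · have hu1 : u.1 + 1 = c := by omega
          rw [Nat.mod_eq_of_lt h1, hu1, Nat.mod_self] at this; omega
      · have ht1 : t.1 + 1 = c := by omega
        rcases Nat.lt_or_ge (u.1+1) c with h3 | h3
        · rw [Nat.mod_eq_of_lt h3, ht1, Nat.mod_self] at this; omega
        · have hu1 : u.1 + 1 = c := by omega
          omega
  · refine ⟨fun t => f^[t.1] y, fun t => col (f^[t.1] y), ?_, ?_, ?_, ?_⟩
    · intro t u h
      exact Fin.ext (hinj t.1 u.1 t.2 u.2 h)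
    · intro t u h
      apply Fin.ext
      have h2 : f (f^[t.1] y) = f (f^[u.1] y) := by
        exact congrArg g h
      rw [← Function.iterate_succ_apply' f t.1 y, ← Function.iterate_succ_apply' f u.1 y] at h2
      rw [← hcper.iterate_mod_apply (t.1+1), ← hcper.iterate_mod_apply (u.1+1)] at h2
      have := hinj _ _ (Nat.mod_lt _ hcpos) (Nat.mod_lt _ hcpos) h2
      rcases Nat.lt_or_ge (t.1+1) c with h1 | h1
      · rcases Nat.lt_or_ge (u.1+1) c with h3 | h3
        · rw [Nat.mod_eq_of_lt h1, Nat.mod_eq_of_lt h3] at this; omega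
        · have hu1 : u.1 + 1 = c := by omega
          rw [Nat.mod_eq_of_lt h1, hu1, Nat.mod_self] at this; omega
      · have ht1 : t.1 + 1 = c := by omega
        rcases Nat.lt_or_ge (u.1+1) c with h3 | h3
        · rw [Nat.mod_eq_of_lt h3, ht1, Nat.mod_self] at this; omega
        · omega
    · intro t
      exact hcolA _ (horbY t.1)
    · intro t
      show B (f^[(t.1+1) % c] y) (col (f^[t.1] y)) = 1
      rw [hcper.iterate_mod_apply (t.1+1), Function.iterate_succ_apply']
      exact hgB _ (hcolT _ (horbY t.1))

lemma wsne_of_cycle {m n k s : ℕ} (hk : 1 ≤ k) {ε : ℝ}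
    (hε0 : 1 - 1 / (k : ℝ) ≤ ε)
    {A B : Matrix (Fin m) (Fin n) ℝ} (hWL : IsWinLose A B)
    (hs1 : 1 ≤ s) (hsk : s ≤ k) (hcyc : HasBipartiteCycle A B s) :
    ∃ (p : Fin m → ℝ) (q : Fin n → ℝ),
      IsWSNE A B ε p q ∧
      (strategySupport p).card ≤ k ∧ (strategySupport q).card ≤ k := by
  classical
  obtain ⟨ri, cj, hri, hcj, hA, hB⟩ := hcyc
  have hs0 : (0:ℝ) < s := by exact_mod_cast hs1
  have hk0 : (0:ℝ) < k := by exact_mod_cast hk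
  have hsk' : (1:ℝ)/k ≤ 1/s := by
    apply one_div_le_one_div_of_le hs0
    exact_mod_cast hsk
  set p : Fin m → ℝ := fun i => ∑ t : Fin s, if ri t = i then (1/s : ℝ) else 0 with hp
  set q : Fin n → ℝ := fun j => ∑ t : Fin s, if cj t = j then (1/s : ℝ) else 0 with hq
  have hpnn : ∀ i, 0 ≤ p i := by
    intro i
    apply Finset.sum_nonneg
    intro t _
    split <;> positivity
  have hqnn : ∀ j, 0 ≤ q j := by
    intro j
    apply Finset.sum_nonneg
    intro t _
    split <;> positivity
  have hpsum : ∑ i, p i = 1 := by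
    rw [hp]
    rw [Finset.sum_comm]
    simp [Finset.sum_ite_eq, Finset.card_univ]
    field_simp
  have hqsum : ∑ j, q j = 1 := by
    rw [hq]
    rw [Finset.sum_comm]
    simp [Finset.sum_ite_eq, Finset.card_univ]
    field_simp
  have hpval : ∀ t, p (ri t) = 1/s := by
    intro t
    rw [hp]
    simp only [hri.eq_iff]
    simp
  have hqval : ∀ t, q (cj t) = 1/s := by
    intro t
    rw [hq]
    simp only [hcj.eq_iff]
    simp
  have hpsupp : ∀ i, 0 < p i → ∃ t, ri t = i := by
    intro i hi
    by_contra h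
    push_neg at h
    have : p i = 0 := by
      rw [hp]
      exact Finset.sum_eq_zero fun t _ => if_neg (h t)
    linarith
  have hqsupp : ∀ j, 0 < q j → ∃ t, cj t = j := by
    intro j hj
    by_contra h
    push_neg at h
    have : q j = 0 := by
      rw [hq]
      exact Finset.sum_eq_zero fun t _ => if_neg (h t)
    linarith
  -- upper bounds on payoffs
  have hqub : ∀ i', ∑ j, A i' j * q j ≤ 1 := by
    intro i'
    rw [← hqsum]
    apply Finset.sum_le_sum
    intro j _
    rcases (hWL i' j).1 with h | h <;> rw [h] <;> [simp [hqnn j]; simp]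
  have hpub : ∀ j', ∑ i, p i * B i j' ≤ 1 := by
    intro j'
    rw [← hpsum]
    apply Finset.sum_le_sum
    intro i _
    rcases (hWL i j').2 with h | h <;> rw [h] <;> [simp [hpnn i]; simp]
  refine ⟨p, q, ⟨⟨hpnn, hpsum⟩, ⟨hqnn, hqsum⟩, ?_, ?_⟩, ?_, ?_⟩
  · intro i hi i'
    obtain ⟨t, rfl⟩ := hpsupp i hi
    have hlow : (1:ℝ)/s ≤ ∑ j, A (ri t) j * q j := by
      have := Finset.single_le_sum (f := fun j => A (ri t) j * q j)
        (fun j _ => by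
          rcases (hWL (ri t) j).1 with h | h <;> rw [h] <;> [simp; simp [hqnn j]])
        (Finset.mem_univ (cj t))
      rw [hA t, hqval t, one_mul] at this
      exact this
    have := hqub i'
    have hεs : 1 - ε ≤ 1/s := by linarith [hsk']
    linarith
  · intro j hj j'
    obtain ⟨t, rfl⟩ := hqsupp j hj
    have hlow : (1:ℝ)/s ≤ ∑ i, p i * B i (cj t) := by
      set i1 : Fin m := ri ⟨(t.1 + 1) % s, Nat.mod_lt _ t.pos⟩ with hi1
      have := Finset.single_le_sum (f := fun i => p i * B i (cj t))
        (fun i _ => by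
          rcases (hWL i (cj t)).2 with h | h <;> rw [h] <;> [simp; simp [hpnn i]])
        (Finset.mem_univ i1)
      rw [hi1] at this
      rw [hB t, hpval, mul_one] at this
      exact this
    have := hpub j'
    have hεs : 1 - ε ≤ 1/s := by linarith [hsk']
    linarith
  · calc (strategySupport p).card ≤ (Finset.univ.image ri).card := by
          apply Finset.card_le_card
          intro i hi
          rw [mem_strategySupport] at hi
          obtain ⟨t, rfl⟩ := hpsupp i hi
          exact Finset.mem_image_of_mem ri (Finset.mem_univ t)
      _ = s := by rw [Finset.card_image_of_injective _ hri]; simp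
      _ ≤ k := hsk
  · calc (strategySupport q).card ≤ (Finset.univ.image cj).card := by
          apply Finset.card_le_card
          intro j hj
          rw [mem_strategySupport] at hj
          obtain ⟨t, rfl⟩ := hqsupp j hj
          exact Finset.mem_image_of_mem cj (Finset.mem_univ t)
      _ = s := by rw [Finset.card_image_of_injective _ hcj]; simp
      _ ≤ k := hsk

lemma wsne_of_undominated_rows {m n k : ℕ} (hk : 1 ≤ k) {ε : ℝ}
    (hε0 : 1 - 1 / (k : ℝ) ≤ ε)
    {A B : Matrix (Fin m) (Fin n) ℝ} (hWL : IsWinLose A B)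
    (hdeg : MinOutDegOne A B)
    {S : Finset (Fin m)} (hcard : S.card = k) (hund : ¬ ∃ j, ∀ i ∈ S, B i j = 1) :
    ∃ (p : Fin m → ℝ) (q : Fin n → ℝ),
      IsWSNE A B ε p q ∧
      (strategySupport p).card ≤ k ∧ (strategySupport q).card ≤ k := by
  classical
  have hk0 : (0:ℝ) < k := by exact_mod_cast hk
  obtain ⟨c, hc⟩ := Classical.axiomOfChoice hdeg.1
  set p : Fin m → ℝ := fun i => if i ∈ S then (1/k : ℝ) else 0 with hp
  set q : Fin n → ℝ := fun j => ∑ i ∈ S, if c i = j then (1/k : ℝ) else 0 with hq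
  have hpnn : ∀ i, 0 ≤ p i := by
    intro i; rw [hp]; dsimp only; split <;> positivity
  have hqnn : ∀ j, 0 ≤ q j := by
    intro j
    apply Finset.sum_nonneg
    intro i _
    split <;> positivity
  have hpsum : ∑ i, p i = 1 := by
    rw [hp]
    rw [Finset.sum_ite_mem, Finset.univ_inter, Finset.sum_const, hcard]
    simp
    field_simp
  have hqsum : ∑ j, q j = 1 := by
    rw [hq, Finset.sum_comm]
    have : ∀ i ∈ S, ∑ j, (if c i = j then (1/k:ℝ) else 0) = 1/k := by
      intro i _
      simp [Finset.sum_ite_eq]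
    rw [Finset.sum_congr rfl this, Finset.sum_const, hcard]
    simp
    field_simp
  have hpS : ∀ i, 0 < p i → i ∈ S := by
    intro i hi
    by_contra h
    rw [hp] at hi; simp only [if_neg h] at hi; linarith
  have hqval : ∀ i ∈ S, 1/(k:ℝ) ≤ q (c i) := by
    intro i hi
    have h := Finset.single_le_sum (f := fun i' => if c i' = c i then (1/k:ℝ) else 0)
      (fun i' _ => by split <;> positivity) hi
    rw [if_pos rfl] at h
    rw [hq]
    exact h
  have hqub : ∀ i', ∑ j, A i' j * q j ≤ 1 := by
    intro i'
    rw [← hqsum]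
    apply Finset.sum_le_sum
    intro j _
    rcases (hWL i' j).1 with h | h <;> rw [h] <;> [simp [hqnn j]; simp]
  have hpub : ∀ j', ∑ i, p i * B i j' ≤ 1 - 1/k := by
    intro j'
    push_neg at hund
    obtain ⟨i0, hi0S, hi0⟩ := hund j'
    have hi0' : B i0 j' = 0 := by rcases (hWL i0 j').2 with h | h; exact h; exact absurd h hi0
    have h1 : ∑ i, p i * B i j' = ∑ i ∈ S, (1/k:ℝ) * B i j' := by
      rw [hp]
      rw [← Finset.sum_subset (Finset.subset_univ S)]
      · apply Finset.sum_congr rfl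
        intro i hi
        dsimp only
        rw [if_pos hi]
      · intro i _ hi
        dsimp only
        rw [if_neg hi, zero_mul]
    rw [h1]
    have h2 : ∑ i ∈ S, (1/k:ℝ) * B i j' = ∑ i ∈ S.erase i0, (1/k:ℝ) * B i j' := by
      rw [← Finset.sum_erase_add S _ hi0S, hi0', mul_zero, add_zero]
    rw [h2]
    have h3 : ∑ i ∈ S.erase i0, (1/k:ℝ) * B i j' ≤ ∑ i ∈ S.erase i0, (1/k:ℝ) := by
      apply Finset.sum_le_sum
      intro i _
      rcases (hWL i j').2 with h | h <;> rw [h] <;> simp [le_of_lt (by positivity : (0:ℝ) < 1/k)]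
    have h4 : ∑ i ∈ S.erase i0, (1/k:ℝ) = ((k:ℝ) - 1) * (1/k) := by
      rw [Finset.sum_const, Finset.card_erase_of_mem hi0S, hcard]
      have : ((k - 1 : ℕ) : ℝ) = (k:ℝ) - 1 := by
        have : (1:ℕ) ≤ k := hk
        push_cast [this]
        ring
      rw [nsmul_eq_mul, this]
    rw [h4] at h3
    have : ((k:ℝ) - 1) * (1/k) = 1 - 1/k := by field_simp
    linarith [h3]
  refine ⟨p, q, ⟨⟨hpnn, hpsum⟩, ⟨hqnn, hqsum⟩, ?_, ?_⟩, ?_, ?_⟩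
  · intro i hi i'
    have hiS := hpS i hi
    have hlow : (1:ℝ)/k ≤ ∑ j, A i j * q j := by
      have := Finset.single_le_sum (f := fun j => A i j * q j)
        (fun j _ => by
          rcases (hWL i j).1 with h | h <;> rw [h] <;> [simp; simp [hqnn j]])
        (Finset.mem_univ (c i))
      rw [hc i, one_mul] at this
      linarith [hqval i hiS]
    have := hqub i'
    linarith
  · intro j hj j'
    have h0 : 0 ≤ ∑ i, p i * B i j := by
      apply Finset.sum_nonneg
      intro i _
      rcases (hWL i j).2 with h | h <;> rw [h] <;> simp [hpnn i]
    have := hpub j'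
    linarith
  · have : strategySupport p ⊆ S := fun i hi => hpS i (mem_strategySupport.mp hi)
    calc (strategySupport p).card ≤ S.card := Finset.card_le_card this
      _ = k := hcard
  · have hsub : strategySupport q ⊆ S.image c := by
      intro j hj
      rw [mem_strategySupport] at hj
      by_contra h
      have : q j = 0 := by
        rw [hq]
        apply Finset.sum_eq_zero
        intro i hi
        apply if_neg
        intro hcont
        exact h (hcont ▸ Finset.mem_image_of_mem c hi)
      linarith
    calc (strategySupport q).card ≤ (S.image c).card := Finset.card_le_card hsub
      _ ≤ S.card := Finset.card_image_le
      _ = k := hcard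

lemma wsne_of_undominated_cols {m n k : ℕ} (hk : 1 ≤ k) {ε : ℝ}
    (hε0 : 1 - 1 / (k : ℝ) ≤ ε)
    {A B : Matrix (Fin m) (Fin n) ℝ} (hWL : IsWinLose A B)
    (hdeg : MinOutDegOne A B)
    {T : Finset (Fin n)} (hcard : T.card = k) (hund : ¬ ∃ i, ∀ j ∈ T, A i j = 1) :
    ∃ (p : Fin m → ℝ) (q : Fin n → ℝ),
      IsWSNE A B ε p q ∧
      (strategySupport p).card ≤ k ∧ (strategySupport q).card ≤ k := by
  classical
  have hk0 : (0:ℝ) < k := by exact_mod_cast hk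
  obtain ⟨r, hr⟩ := Classical.axiomOfChoice hdeg.2
  set q : Fin n → ℝ := fun j => if j ∈ T then (1/k : ℝ) else 0 with hq
  set p : Fin m → ℝ := fun i => ∑ j ∈ T, if r j = i then (1/k : ℝ) else 0 with hp
  have hqnn : ∀ j, 0 ≤ q j := by
    intro j; rw [hq]; dsimp only; split <;> positivity
  have hpnn : ∀ i, 0 ≤ p i := by
    intro i
    apply Finset.sum_nonneg
    intro j _
    split <;> positivity
  have hqsum : ∑ j, q j = 1 := by
    rw [hq]
    rw [Finset.sum_ite_mem, Finset.univ_inter, Finset.sum_const, hcard]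
    simp
    field_simp
  have hpsum : ∑ i, p i = 1 := by
    rw [hp, Finset.sum_comm]
    have : ∀ j ∈ T, ∑ i, (if r j = i then (1/k:ℝ) else 0) = 1/k := by
      intro j _
      simp [Finset.sum_ite_eq]
    rw [Finset.sum_congr rfl this, Finset.sum_const, hcard]
    simp
    field_simp
  have hqT : ∀ j, 0 < q j → j ∈ T := by
    intro j hj
    by_contra h
    rw [hq] at hj; simp only [if_neg h] at hj; linarith
  have hpval : ∀ j ∈ T, 1/(k:ℝ) ≤ p (r j) := by
    intro j hj
    have h := Finset.single_le_sum (f := fun j' => if r j' = r j then (1/k:ℝ) else 0)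
      (fun j' _ => by split <;> positivity) hj
    rw [if_pos rfl] at h
    rw [hp]
    exact h
  have hpub : ∀ j', ∑ i, p i * B i j' ≤ 1 := by
    intro j'
    rw [← hpsum]
    apply Finset.sum_le_sum
    intro i _
    rcases (hWL i j').2 with h | h <;> rw [h] <;> [simp [hpnn i]; simp]
  have hqub : ∀ i', ∑ j, A i' j * q j ≤ 1 - 1/k := by
    intro i'
    push_neg at hund
    obtain ⟨j0, hj0T, hj0⟩ := hund i'
    have hj0' : A i' j0 = 0 := by rcases (hWL i' j0).1 with h | h; exact h; exact absurd h hj0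
    have h1 : ∑ j, A i' j * q j = ∑ j ∈ T, A i' j * (1/k:ℝ) := by
      rw [hq]
      rw [← Finset.sum_subset (Finset.subset_univ T)]
      · apply Finset.sum_congr rfl
        intro j hj
        dsimp only
        rw [if_pos hj]
      · intro j _ hj
        dsimp only
        rw [if_neg hj, mul_zero]
    rw [h1]
    have h2 : ∑ j ∈ T, A i' j * (1/k:ℝ) = ∑ j ∈ T.erase j0, A i' j * (1/k:ℝ) := by
      rw [← Finset.sum_erase_add T _ hj0T, hj0', zero_mul, add_zero]
    rw [h2]
    have h3 : ∑ j ∈ T.erase j0, A i' j * (1/k:ℝ) ≤ ∑ j ∈ T.erase j0, (1/k:ℝ) := by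
      apply Finset.sum_le_sum
      intro j _
      rcases (hWL i' j).1 with h | h <;> rw [h] <;> simp [le_of_lt (by positivity : (0:ℝ) < 1/k)]
    have h4 : ∑ j ∈ T.erase j0, (1/k:ℝ) = ((k:ℝ) - 1) * (1/k) := by
      rw [Finset.sum_const, Finset.card_erase_of_mem hj0T, hcard]
      have : ((k - 1 : ℕ) : ℝ) = (k:ℝ) - 1 := by
        have : (1:ℕ) ≤ k := hk
        push_cast [this]
        ring
      rw [nsmul_eq_mul, this]
    rw [h4] at h3
    have : ((k:ℝ) - 1) * (1/k) = 1 - 1/k := by field_simp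
    linarith [h3]
  refine ⟨p, q, ⟨⟨hpnn, hpsum⟩, ⟨hqnn, hqsum⟩, ?_, ?_⟩, ?_, ?_⟩
  · intro i hi i'
    have h0 : 0 ≤ ∑ j, A i j * q j := by
      apply Finset.sum_nonneg
      intro j _
      rcases (hWL i j).1 with h | h <;> rw [h] <;> simp [hqnn j]
    have := hqub i'
    linarith
  · intro j hj j'
    have hjT := hqT j hj
    have hlow : (1:ℝ)/k ≤ ∑ i, p i * B i j := by
      have := Finset.single_le_sum (f := fun i => p i * B i j)
        (fun i _ => by
          rcases (hWL i j).2 with h | h <;> rw [h] <;> [simp; simp [hpnn i]])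
        (Finset.mem_univ (r j))
      rw [hr j, mul_one] at this
      linarith [hpval j hjT]
    have := hpub j'
    linarith
  · have hsub : strategySupport p ⊆ T.image r := by
      intro i hi
      rw [mem_strategySupport] at hi
      by_contra h
      have : p i = 0 := by
        rw [hp]
        apply Finset.sum_eq_zero
        intro j hj
        apply if_neg
        intro hcont
        exact h (hcont ▸ Finset.mem_image_of_mem r hj)
      linarith
    calc (strategySupport p).card ≤ (T.image r).card := Finset.card_le_card hsub
      _ ≤ T.card := Finset.card_image_le
      _ = k := hcard
  · have : strategySupport q ⊆ T := fun j hj => hqT j (mem_strategySupport.mp hj)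
    calc (strategySupport q).card ≤ T.card := Finset.card_le_card this
      _ = k := hcard
/-- Theorem 1 (characterization of win-lose games with small-support ε-WSNE). -/
theorem WSNE_characterization {m n k : ℕ} (hk : 1 ≤ k) (ε : ℝ)
    (hε0 : 1 - 1 / (k : ℝ) ≤ ε) (hε1 : ε < 1)
    (A B : Matrix (Fin m) (Fin n) ℝ)
    (hWL : IsWinLose A B) (hdeg : MinOutDegOne A B) :
    (∃ (p : Fin m → ℝ) (q : Fin n → ℝ),
      IsWSNE A B ε p q ∧
      (strategySupport p).card ≤ k ∧ (strategySupport q).card ≤ k) ↔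
    ((∃ S : Finset (Fin m), S.card = k ∧ ¬ ∃ j, ∀ i ∈ S, B i j = 1) ∨
     (∃ T : Finset (Fin n), T.card = k ∧ ¬ ∃ i, ∀ j ∈ T, A i j = 1) ∨
     (∃ s, 1 ≤ s ∧ s ≤ k ∧ HasBipartiteCycle A B s)) := by

  classical
  constructor
  · rintro ⟨p, q, ⟨⟨hpnn, hpsum⟩, ⟨hqnn, hqsum⟩, hrowC, hcolC⟩, hpcard, hqcard⟩
    have hSne : (strategySupport p).Nonempty := by
      by_contra h
      rw [Finset.not_nonempty_iff_eq_empty] at h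
      have := sum_strategySupport (p := p) ⟨hpnn, hpsum⟩
      rw [h] at this
      simp at this
    have hTne : (strategySupport q).Nonempty := by
      by_contra h
      rw [Finset.not_nonempty_iff_eq_empty] at h
      have := sum_strategySupport (p := q) ⟨hqnn, hqsum⟩
      rw [h] at this
      simp at this
    have hm1 : 1 ≤ m := by
      obtain ⟨i, -⟩ := hSne
      exact i.pos
    have hn1 : 1 ≤ n := by
      obtain ⟨j, -⟩ := hTne
      exact j.pos
    by_cases hrows : ∃ S : Finset (Fin m), S.card = k ∧ ¬ ∃ j, ∀ i ∈ S, B i j = 1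
    · exact Or.inl hrows
    by_cases hcols : ∃ T : Finset (Fin n), T.card = k ∧ ¬ ∃ i, ∀ j ∈ T, A i j = 1
    · exact Or.inr (Or.inl hcols)
    refine Or.inr (Or.inr ?_)
    push_neg at hrows hcols
    rcases Nat.lt_or_ge (min m n) k with hsmall | hbig
    · -- small case: cycle in the whole graph
      have huniv : (Finset.univ : Finset (Fin m)).Nonempty := ⟨⟨0, hm1⟩, Finset.mem_univ _⟩
      obtain ⟨s, hs1, hsm, hsn, hcyc⟩ := exists_cycle_aux A B Finset.univ Finset.univ huniv
        (fun i _ => by obtain ⟨j, hj⟩ := hdeg.1 i; exact ⟨j, Finset.mem_univ _, hj⟩)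
        (fun j _ => by obtain ⟨i, hi⟩ := hdeg.2 j; exact ⟨i, Finset.mem_univ _, hi⟩)
      rw [Finset.card_univ, Fintype.card_fin] at hsm hsn
      exact ⟨s, hs1, by omega, hcyc⟩
    · -- big case
      have hkm : k ≤ m := le_trans hbig (min_le_left m n)
      have hkn : k ≤ n := le_trans hbig (min_le_right m n)
      obtain ⟨S', hSS', hS'card⟩ := Finset.exists_superset_card_eq hpcard
        (by rw [Fintype.card_fin]; exact hkm)
      obtain ⟨T', hTT', hT'card⟩ := Finset.exists_superset_card_eq hqcard
        (by rw [Fintype.card_fin]; exact hkn)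
      obtain ⟨jdom, hjdom⟩ := hrows S' hS'card
      obtain ⟨idom, hidom⟩ := hcols T' hT'card
      have hBdomsum : ∑ i, p i * B i jdom = 1 := by
        have h1 : ∑ i, p i * B i jdom = ∑ i ∈ strategySupport p, p i * B i jdom := by
          symm
          apply Finset.sum_subset (Finset.subset_univ _)
          intro i _ hi
          rw [mem_strategySupport] at hi
          have : p i = 0 := le_antisymm (not_lt.mp hi) (hpnn i)
          rw [this, zero_mul]
        rw [h1]
        have h2 : ∀ i ∈ strategySupport p, p i * B i jdom = p i := by
          intro i hi
          rw [hjdom i (hSS' hi), mul_one]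
        rw [Finset.sum_congr rfl h2, sum_strategySupport ⟨hpnn, hpsum⟩]
      have hAdomsum : ∑ j, A idom j * q j = 1 := by
        have h1 : ∑ j, A idom j * q j = ∑ j ∈ strategySupport q, A idom j * q j := by
          symm
          apply Finset.sum_subset (Finset.subset_univ _)
          intro j _ hj
          rw [mem_strategySupport] at hj
          have : q j = 0 := le_antisymm (not_lt.mp hj) (hqnn j)
          rw [this, mul_zero]
        rw [h1]
        have h2 : ∀ j ∈ strategySupport q, A idom j * q j = q j := by
          intro j hj
          rw [hidom j (hTT' hj), one_mul]
        rw [Finset.sum_congr rfl h2, sum_strategySupport ⟨hqnn, hqsum⟩]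
      -- every column in supp q has an in-neighbor in supp p
      have hcolE : ∀ j ∈ strategySupport q, ∃ i ∈ strategySupport p, B i j = 1 := by
        intro j hj
        rw [mem_strategySupport] at hj
        have hge := hcolC j hj jdom
        rw [hBdomsum] at hge
        have hpos : 0 < ∑ i, p i * B i j := by linarith
        obtain ⟨i, -, hi⟩ := Finset.exists_lt_of_sum_lt (f := fun _ => (0:ℝ))
          (g := fun i => p i * B i j) (by simpa using hpos)
        rcases (hWL i j).2 with h | h
        · rw [h, mul_zero] at hi; exact absurd hi (lt_irrefl 0)
        · rw [h, mul_one] at hi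
          exact ⟨i, mem_strategySupport.mpr hi, h⟩
      have hrowE : ∀ i ∈ strategySupport p, ∃ j ∈ strategySupport q, A i j = 1 := by
        intro i hi
        rw [mem_strategySupport] at hi
        have hge := hrowC i hi idom
        rw [hAdomsum] at hge
        have hpos : 0 < ∑ j, A i j * q j := by linarith
        obtain ⟨j, -, hj⟩ := Finset.exists_lt_of_sum_lt (f := fun _ => (0:ℝ))
          (g := fun j => A i j * q j) (by simpa using hpos)
        rcases (hWL i j).1 with h | h
        · rw [h, zero_mul] at hj; exact absurd hj (lt_irrefl 0)
        · rw [h, one_mul] at hj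
          exact ⟨j, mem_strategySupport.mpr hj, h⟩
      obtain ⟨s, hs1, hsS, hsT, hcyc⟩ := exists_cycle_aux A B
        (strategySupport p) (strategySupport q) hSne hrowE hcolE
      exact ⟨s, hs1, le_trans hsS hpcard, hcyc⟩
  · rintro (⟨S, hcard, hund⟩ | ⟨T, hcard, hund⟩ | ⟨s, hs1, hsk, hcyc⟩)
    · exact wsne_of_undominated_rows hk hε0 hWL hdeg hcard hund
    · exact wsne_of_undominated_cols hk hε0 hWL hdeg hcard hund
    · exact wsne_of_cycle hk hε0 hWL hs1 hsk hcyc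
end

section
/- Every bimatrix game (A,B) with all payoff entries in the interval [0,1] has a (1/2)-approximate Nash equilibrium (p,q) in which the support of p has cardinality at most 2 and the support of q has cardinality at most 1. -/
open Finset

/-- Every bimatrix game with payoffs in [0,1] has a (1/2)-approximate Nash
equilibrium with row support of size at most 2 and column support of size 1. -/
theorem half_NE_small_support (m n : ℕ) (hm : 1 ≤ m) (hn : 1 ≤ n)
    (A B : Matrix (Fin m) (Fin n) ℝ)
    (hA : ∀ i j, A i j ∈ Set.Icc (0 : ℝ) 1) (hB : ∀ i j, B i j ∈ Set.Icc (0 : ℝ) 1) :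
    ∃ (p : Fin m → ℝ) (q : Fin n → ℝ), IsStrategy p ∧ IsStrategy q ∧
      (∀ i', ∑ i, ∑ j, p i * A i j * q j ≥ (∑ j, A i' j * q j) - 1 / 2) ∧
      (∀ j', ∑ i, ∑ j, p i * B i j * q j ≥ (∑ i, p i * B i j') - 1 / 2) ∧
      (strategySupport p).card ≤ 2 ∧ (strategySupport q).card ≤ 1 := by
  haveI : NeZero m := ⟨by omega⟩
  haveI : NeZero n := ⟨by omega⟩
  obtain ⟨j1, -, hj1⟩ := Finset.exists_max_image Finset.univ (fun j => B 0 j)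
    ⟨0, Finset.mem_univ _⟩
  obtain ⟨i2, -, hi2⟩ := Finset.exists_max_image Finset.univ (fun i => A i j1)
    ⟨0, Finset.mem_univ _⟩
  set p : Fin m → ℝ := fun i => (if i = 0 then 1/2 else 0) + (if i = i2 then 1/2 else 0) with hp
  set q : Fin n → ℝ := fun j => if j = j1 then 1 else 0 with hq
  have hpsum : ∑ i, p i = 1 := by
    simp [hp, Finset.sum_add_distrib]
    norm_num
  have hqsimp : ∀ (f : Fin n → ℝ), ∑ j, f j * q j = f j1 := by
    intro f
    simp [hq, mul_ite]
  have hA0 := hA 0 j1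
  have hAi2 := hA i2 j1
  have hBi2 : ∀ j', B i2 j' ∈ Set.Icc (0:ℝ) 1 := fun j' => hB i2 j'
  refine ⟨p, q, ⟨fun i => by positivity, hpsum⟩, ⟨fun j => by simp [hq]; split <;> norm_num, by simp [hq]⟩, ?_, ?_, ?_, ?_⟩
  · intro i'
    have h1 : ∑ i, ∑ j, p i * A i j * q j = (A 0 j1)/2 + (A i2 j1)/2 := by
      have : ∀ i, ∑ j, p i * A i j * q j = p i * A i j1 := by
        intro i; simpa using hqsimp (fun j => p i * A i j)
      rw [Finset.sum_congr rfl (fun i _ => this i)]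
      simp only [hp]
      rw [show (fun i => ((if i = 0 then (1:ℝ)/2 else 0) + (if i = i2 then 1/2 else 0)) * A i j1)
          = fun i => ((if i = 0 then A i j1/2 else 0) + (if i = i2 then A i j1/2 else 0)) by
        funext i; split <;> split <;> ring]
      simp [Finset.sum_add_distrib]
    rw [h1, hqsimp (fun j => A i' j)]
    have h2 := hi2 i' (Finset.mem_univ _)
    rcases hA0 with ⟨h3, -⟩
    rcases hAi2 with ⟨-, h4⟩
    linarith
  · intro j'
    have h1 : ∑ i, ∑ j, p i * B i j * q j = (B 0 j1)/2 + (B i2 j1)/2 := by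
      have : ∀ i, ∑ j, p i * B i j * q j = p i * B i j1 := by
        intro i; simpa using hqsimp (fun j => p i * B i j)
      rw [Finset.sum_congr rfl (fun i _ => this i)]
      simp only [hp]
      rw [show (fun i => ((if i = 0 then (1:ℝ)/2 else 0) + (if i = i2 then 1/2 else 0)) * B i j1)
          = fun i => ((if i = 0 then B i j1/2 else 0) + (if i = i2 then B i j1/2 else 0)) by
        funext i; split <;> split <;> ring]
      simp [Finset.sum_add_distrib]
    have h2 : ∑ i, p i * B i j' = (B 0 j')/2 + (B i2 j')/2 := by
      simp only [hp]
      rw [show (fun i => ((if i = 0 then (1:ℝ)/2 else 0) + (if i = i2 then 1/2 else 0)) * B i j')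
          = fun i => ((if i = 0 then B i j'/2 else 0) + (if i = i2 then B i j'/2 else 0)) by
        funext i; split <;> split <;> ring]
      simp [Finset.sum_add_distrib]
    rw [h1, h2]
    have h3 := hj1 j' (Finset.mem_univ _)
    rcases hBi2 j' with ⟨-, h4⟩
    rcases hB i2 j1 with ⟨h5, -⟩
    linarith
  · have hsub : strategySupport p ⊆ {0, i2} := by
      intro i hi
      simp only [strategySupport, Finset.mem_filter] at hi
      simp only [Finset.mem_insert, Finset.mem_singleton]
      by_contra hc
      push_neg at hc
      simp [hp, hc.1, hc.2] at hi
    calc (strategySupport p).card ≤ ({0, i2} : Finset (Fin m)).card := Finset.card_le_card hsub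
      _ ≤ 2 := by
        apply le_trans (Finset.card_insert_le _ _)
        simp
  · have hsub : strategySupport q ⊆ {j1} := by
      intro j hj
      simp only [strategySupport, Finset.mem_filter] at hj
      simp only [Finset.mem_singleton]
      by_contra hc
      simp [hq, hc] at hj
    simpa using Finset.card_le_card hsub
end
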